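/- Let T(q) = t₀·(1 + a·(q/c)^β) be the BPR travel-time function with t₀ > 0, a > 0, c > 0, and β ≥ 1 a natural number. Then the function g(v) = v·T(b + v) is convex on [0, ∞) for any fixed b ≥ 0. -/

import Mathlib

theorem stmt_2 (t₀ a c b : ℝ) (ht₀ : 0 < t₀) (ha : 0 < a) (hc : 0 < c)
    (hb : 0 ≤ b) (β : ℕ) (hβ : 1 ≤ β) :
    ConvexOn ℝ (Set.Ici (0:ℝ))
      (fun v => v * (t₀ * (1 + a * ((b + v) / c) ^ β))) := by
  have hpow : ConvexOn ℝ (Set.Ici (0:ℝ)) (fun v : ℝ => (b + v) ^ β) := by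
    have := (convexOn_pow (𝕜 := ℝ) β).comp_affineMap
      (AffineMap.const ℝ ℝ b + AffineMap.id ℝ ℝ)
    refine this.subset (fun x hx => ?_) (convex_Ici 0)
    simp only [Set.mem_preimage, AffineMap.coe_add, AffineMap.coe_const, AffineMap.coe_id]
    have : (0:ℝ) ≤ b + x := add_nonneg hb hx
    simpa using this
  have hmul : ConvexOn ℝ (Set.Ici (0:ℝ)) (fun v : ℝ => v * (b + v) ^ β) := by
    have := (convexOn_id (convex_Ici (0:ℝ))).mul hpow
      (fun x hx => hx) (fun x hx => pow_nonneg (add_nonneg hb hx) β)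
      (MonotoneOn.monovaryOn (fun x _ y _ hxy => hxy)
        (fun x hx y hy hxy =>
          pow_le_pow_left₀ (add_nonneg hb hx) (by linarith) β))
    exact this
  have key : ConvexOn ℝ (Set.Ici (0:ℝ))
      (fun v : ℝ => t₀ * v + (t₀ * a / c ^ β) * (v * (b + v) ^ β)) := by
    refine ConvexOn.add ?_ (hmul.smul (by positivity))
    exact (convexOn_id (convex_Ici (0:ℝ))).smul ht₀.le
  have heq : (fun v : ℝ => v * (t₀ * (1 + a * ((b + v) / c) ^ β)))
      = fun v : ℝ => t₀ * v + (t₀ * a / c ^ β) * (v * (b + v) ^ β) := by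
    funext v
    rw [div_pow]
    field_simp
  rw [heq]
  exact key
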